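/- Let P be an orthogonal projection on a Hilbert space H and M a bounded self-adjoint operator with 0 ≤ M ≤ 1. Suppose ψ ∈ H satisfies ψ = M P M ψ. Then, setting ψ̃ = P M ψ, one has (1 − M²)ψ̃ = 0. -/

import Mathlib

open RCLike ContinuousLinearMap

/-- If `0 ≤ M ≤ 1` then `re ⟪x, M x⟫ ≤ ‖x‖ ^ 2`. -/
lemma aux_inner_le {H : Type*} [NormedAddCommGroup H] [InnerProductSpace ℂ H]
    [CompleteSpace H] (M : H →L[ℂ] H)
    (hMle : ((1 : H →L[ℂ] H) - M).IsPositive) (x : H) :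
    re (@inner ℂ _ _ x (M x)) ≤ ‖x‖ ^ 2 := by
  have h := hMle.re_inner_nonneg_right x
  simp only [sub_apply, ContinuousLinearMap.one_apply, inner_sub_right, map_sub] at h
  have hx : re (@inner ℂ H _ x x) = ‖x‖ ^ 2 := by
    rw [inner_self_eq_norm_sq]
  linarith

/-- Contractivity: if `0 ≤ M ≤ 1` then `‖M y‖ ≤ ‖y‖`. -/
lemma aux_norm_apply_le {H : Type*} [NormedAddCommGroup H] [InnerProductSpace ℂ H]
    [CompleteSpace H] (M : H →L[ℂ] H) (hMsa : IsSelfAdjoint M) (hMpos : M.IsPositive)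
    (hMle : ((1 : H →L[ℂ] H) - M).IsPositive) (y : H) : ‖M y‖ ≤ ‖y‖ := by
  let c : PreInnerProductSpace.Core ℂ H :=
  { inner := fun x z => @inner ℂ _ _ x (M z)
    conj_inner_symm := fun x z => by
      show (starRingEnd ℂ) (@inner ℂ H _ z (M x)) = @inner ℂ H _ x (M z)
      rw [inner_conj_symm]
      exact hMsa.isSymmetric x z
    re_inner_nonneg := fun x => hMpos.re_inner_nonneg_right x
    add_left := fun x z w => inner_add_left _ _ _
    smul_left := fun x z r => inner_smul_left _ _ _ }
  have CS : ‖@inner ℂ _ _ y (M (M y))‖ * ‖@inner ℂ _ _ (M y) (M y)‖ ≤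
      re (@inner ℂ _ _ y (M y)) * re (@inner ℂ _ _ (M y) (M (M y))) :=
    @InnerProductSpace.Core.inner_mul_inner_self_le ℂ H _ _ _ c y (M y)
  -- rewrite the core inner products
  have e0 : @inner ℂ H _ y (M (M y)) = @inner ℂ H _ (M y) (M y) :=
    (hMsa.isSymmetric y (M y)).symm
  have e1 : re (@inner ℂ _ _ y (M (M y))) = ‖M y‖ ^ 2 := by
    rw [e0, inner_self_eq_norm_sq]
  have e2 : re (@inner ℂ _ _ y (M y)) ≤ ‖y‖ ^ 2 := aux_inner_le M hMle y
  have e3 : re (@inner ℂ _ _ (M y) (M (M y))) ≤ ‖M y‖ ^ 2 := aux_inner_le M hMle (M y)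
  have hnn : (0:ℝ) ≤ ‖M y‖ := norm_nonneg _
  rcases eq_or_lt_of_le hnn with h0 | h0
  · rw [← h0]; exact norm_nonneg _
  -- CS : ‖⟪y, M (M y)⟫‖ * ‖⟪M y, M y⟫‖ ≤ re ⟪y, M y⟫ * re ⟪M y, M (M y)⟫
  have key : ‖M y‖ ^ 2 * ‖M y‖ ^ 2 ≤ ‖y‖ ^ 2 * ‖M y‖ ^ 2 := by
    have hre : ‖M y‖ ^ 2 ≤ ‖@inner ℂ _ _ y (M (M y))‖ := by
      rw [← e1]; exact re_le_norm _
    have h2 : ‖@inner ℂ _ _ (M y) (M y)‖ = ‖M y‖ ^ 2 := by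
      rw [@inner_self_eq_norm_sq_to_K ℂ]
      simp [norm_pow]
    calc ‖M y‖ ^ 2 * ‖M y‖ ^ 2
        ≤ ‖@inner ℂ _ _ y (M (M y))‖ * ‖@inner ℂ _ _ (M y) (M y)‖ := by
          rw [h2]
          exact mul_le_mul_of_nonneg_right hre (by positivity)
      _ ≤ re (@inner ℂ _ _ y (M y)) * re (@inner ℂ _ _ (M y) (M (M y))) := CS
      _ ≤ ‖y‖ ^ 2 * ‖M y‖ ^ 2 := by
          apply mul_le_mul e2 e3 (hMpos.re_inner_nonneg_right (M y)) (by positivity)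
  have hle : ‖M y‖ ^ 2 ≤ ‖y‖ ^ 2 := le_of_mul_le_mul_right key (pow_pos h0 2)
  nlinarith [norm_nonneg y]

/-- Let `P` be an orthogonal projection and `M` a bounded self-adjoint operator with
`0 ≤ M ≤ 1` on a Hilbert space `H`. If `ψ = M P M ψ`, then `ψ̃ = P M ψ` satisfies
`(1 − M²) ψ̃ = 0`. -/
theorem proj_mul_fixed_point {H : Type*} [NormedAddCommGroup H] [InnerProductSpace ℂ H]
    [CompleteSpace H] (P M : H →L[ℂ] H)
    (hPidem : IsIdempotentElem P) (hPsa : IsSelfAdjoint P)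
    (hMsa : IsSelfAdjoint M) (hMpos : M.IsPositive)
    (hMle : ((1 : H →L[ℂ] H) - M).IsPositive)
    (ψ : H) (hψ : ψ = M (P (M ψ))) :
    ((1 : H →L[ℂ] H) - M * M) (P (M ψ)) = 0 := by
  set φ := P (M ψ) with hφ
  set x := M (M φ) with hx
  have hMψ : M ψ = x := by rw [hx, hφ]; exact congrArg M hψ
  have hPx : P x = φ := by rw [← hMψ, hφ]
  -- orthogonality of P x and x - P x
  have horth : @inner ℂ H _ (P x) (x - P x) = 0 := by
    have h1 : @inner ℂ H _ (P x) (x - P x) = @inner ℂ H _ x (P (x - P x)) :=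
      hPsa.isSymmetric x (x - P x)
    have h2 : P (x - P x) = 0 := by
      have := congrArg (fun T : H →L[ℂ] H => T x) hPidem
      simp only [ContinuousLinearMap.mul_apply] at this
      rw [map_sub, this, sub_self]
    rw [h1, h2, inner_zero_right]
  -- Pythagoras
  have hpyth : ‖P x + (x - P x)‖ ^ 2 = ‖P x‖ ^ 2 + ‖x - P x‖ ^ 2 := by
    have := norm_add_sq_eq_norm_sq_add_norm_sq_of_inner_eq_zero _ _ horth
    simpa [pow_two] using this
  have hsum : P x + (x - P x) = x := by abel
  rw [hsum] at hpyth
  -- norm inequalities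
  have hxle : ‖x‖ ≤ ‖φ‖ := by
    calc ‖x‖ ≤ ‖M φ‖ := aux_norm_apply_le M hMsa hMpos hMle (M φ)
      _ ≤ ‖φ‖ := aux_norm_apply_le M hMsa hMpos hMle φ
  rw [hPx] at hpyth
  have hz : ‖x - φ‖ ^ 2 = 0 := by nlinarith [norm_nonneg x, norm_nonneg φ, norm_nonneg (x - φ)]
  have hxφ : x = φ := by
    have := (pow_eq_zero_iff (n := 2) two_ne_zero).mp hz
    rw [norm_eq_zero] at this
    exact sub_eq_zero.mp this
  have hxφ' : x = φ := hxφ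
  rw [hPx] at *
  simp only [ContinuousLinearMap.sub_apply, ContinuousLinearMap.one_apply,
    ContinuousLinearMap.mul_apply]
  rw [← hx, hxφ', sub_self]
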